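/- Let τ > 0, δ ∈ (0,1/2), C₃ > 0, a₁, a₂ ∈ ℝ, κ₁ ≥ 0, κ₂ > 0, and M as above. Define φ₃(x,y) = C₃((x²+y²)/|y|^{3/2})^{δ} on X₃ = {(x,y) : x ≤ −1, |y| ≥ 1}. Then φ₃ ≥ 0 on X₃, φ₃ → ∞ as x²+y² → ∞ in X₃, and there exist R > 0 and c > 0 such that for (x,y) ∈ X₃ with x²+y² ≥ R², τ(Mφ₃)(x,y) ≤ (δ/2)·x·φ₃(x,y) ≤ −c·|x|·((x²+y²)/|y|^{3/2})^{δ}; in particular Mφ₃ → −∞ as x²+y² → ∞ in X₃. -/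

import Mathlib

set_option maxHeartbeats 2000000


/-- Partial derivative in `x` of a function of two real variables. -/
noncomputable def pdx (f : ℝ → ℝ → ℝ) (x y : ℝ) : ℝ := deriv (fun x' => f x' y) x

/-- Partial derivative in `y` of a function of two real variables. -/
noncomputable def pdy (f : ℝ → ℝ → ℝ) (x y : ℝ) : ℝ := deriv (fun y' => f x y') y

/-- The generator `M` of the planar diffusion, in real coordinates. -/
noncomputable def Mop (τ a₁ a₂ κ₁ κ₂ : ℝ) (f : ℝ → ℝ → ℝ) (x y : ℝ) : ℝ :=
  -(1 / τ) * (x ^ 2 - y ^ 2 - a₁) * pdx f x y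
    - (1 / τ) * (2 * x * y - a₂) * pdy f x y
    + (κ₁ / τ) * pdx (fun x' y' => pdx f x' y') x y
    + (κ₂ / τ) * pdy (fun x' y' => pdy f x' y') x y

lemma abs_pow32 (y : ℝ) : |y| ^ (3/2:ℝ) = (y^2) ^ (3/4:ℝ) := by
  have h : (y^2:ℝ) = |y| ^ (2:ℝ) := by
    rw [show (2:ℝ) = ((2:ℕ):ℝ) by norm_num, Real.rpow_natCast, sq_abs]
  rw [h, ← Real.rpow_mul (abs_nonneg y)]
  norm_num

lemma phi_rw (δ x y : ℝ) (hy : y ≠ 0) :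
    ((x^2+y^2)/|y|^(3/2:ℝ))^(δ:ℝ) = (x^2+y^2)^δ * (y^2)^(-(3*δ/4)) := by
  have hy2 : (0:ℝ) < y^2 := by positivity
  rw [abs_pow32, Real.div_rpow (by positivity : (0:ℝ) ≤ x^2+y^2) (by positivity),
    ← Real.rpow_mul hy2.le, div_eq_mul_inv, ← Real.rpow_neg hy2.le,
    show -(3/4*δ:ℝ) = -(3*δ/4) by ring]

lemma hD_Sx (x y p : ℝ) (h : x^2 + y^2 ≠ 0) :
    HasDerivAt (fun x' => (x'^2+y^2)^p) (2*x*p*(x^2+y^2)^(p-1)) x := by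
  have h1 : HasDerivAt (fun x' : ℝ => x'^2 + y^2) (2*x) x := by
    simpa using (hasDerivAt_pow 2 x).add_const (y^2)
  simpa using h1.rpow_const (Or.inl h)

lemma hD_Sy (x y p : ℝ) (h : x^2 + y^2 ≠ 0) :
    HasDerivAt (fun y' => (x^2+y'^2)^p) (2*y*p*(x^2+y^2)^(p-1)) y := by
  have h1 : HasDerivAt (fun y' : ℝ => x^2 + y'^2) (2*y) y := by
    simpa using ((hasDerivAt_pow 2 y).const_add (x^2))
  simpa using h1.rpow_const (Or.inl h)

lemma hD_U (y q : ℝ) (hy : y ≠ 0) :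
    HasDerivAt (fun y' => (y'^2)^q) (2*y*q*(y^2)^(q-1)) y := by
  have h1 : HasDerivAt (fun y' : ℝ => y'^2) (2*y) y := by
    simpa using hasDerivAt_pow 2 y
  simpa using h1.rpow_const (Or.inl (by positivity))

variable (δ C₃ : ℝ) (φ₃ : ℝ → ℝ → ℝ)

lemma pdx_phi
    (hφ : ∀ x y, φ₃ x y = C₃ * ((x ^ 2 + y ^ 2) / |y| ^ (3 / 2 : ℝ)) ^ (δ : ℝ))
    (x y : ℝ) (hy : y ≠ 0) :
    pdx φ₃ x y = (C₃*2*δ*(y^2)^(-(3*δ/4))) * (x * (x^2+y^2)^(δ-1)) := by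
  have hy2 : (0:ℝ) < y^2 := by positivity
  have hs : x^2+y^2 ≠ 0 := by positivity
  have hfe : (fun x' => φ₃ x' y) = fun x' =>
      (C₃ * (y^2)^(-(3*δ/4))) * ((x'^2+y^2)^δ) := by
    funext x'
    rw [hφ, phi_rw δ x' y hy]; ring
  rw [pdx, hfe, ((hD_Sx x y δ hs).const_mul _).deriv]
  ring

lemma pdxx_phi
    (hφ : ∀ x y, φ₃ x y = C₃ * ((x ^ 2 + y ^ 2) / |y| ^ (3 / 2 : ℝ)) ^ (δ : ℝ))
    (x y : ℝ) (hy : y ≠ 0) :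
    pdx (fun x' y' => pdx φ₃ x' y') x y =
      (C₃*2*δ*(y^2)^(-(3*δ/4))) *
        ((x^2+y^2)^(δ-1) + x * (2*x*(δ-1)*(x^2+y^2)^(δ-1-1))) := by
  have hs : x^2+y^2 ≠ 0 := by positivity
  have hfe : (fun x' => pdx φ₃ x' y) = fun x' =>
      (C₃*2*δ*(y^2)^(-(3*δ/4))) * (x' * (x'^2+y^2)^(δ-1)) := by
    funext x'; exact pdx_phi δ C₃ φ₃ hφ x' y hy
  rw [pdx, hfe]
  refine ((((hasDerivAt_id' (x:=x)).mul (hD_Sx x y (δ-1) hs)).const_mul _).deriv).trans ?_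
  ring

lemma pdy_phi
    (hφ : ∀ x y, φ₃ x y = C₃ * ((x ^ 2 + y ^ 2) / |y| ^ (3 / 2 : ℝ)) ^ (δ : ℝ))
    (x y : ℝ) (hy : y ≠ 0) :
    pdy φ₃ x y = C₃ * (2*δ*(y*((x^2+y^2)^(δ-1) * (y^2)^(-(3*δ/4))))
      + 2*(-(3*δ/4))*(y*((x^2+y^2)^δ * (y^2)^(-(3*δ/4)-1)))) := by
  have hs : x^2+y^2 ≠ 0 := by positivity
  have hev : (fun y' => φ₃ x y') =ᶠ[nhds y]
      fun y' => C₃ * ((x^2+y'^2)^δ * (y'^2)^(-(3*δ/4))) := by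
    filter_upwards [eventually_ne_nhds hy] with y' hy'
    rw [hφ, phi_rw δ x y' hy']
  rw [pdy, hev.deriv_eq]
  refine ((((hD_Sy x y δ hs).mul (hD_U y (-(3*δ/4)) hy)).const_mul C₃).deriv).trans ?_
  ring

lemma hD_mix (x y p q : ℝ) (hy : y ≠ 0) :
    HasDerivAt (fun y' => y' * ((x^2+y'^2)^p * (y'^2)^q))
      (1 * ((x^2+y^2)^p * (y^2)^q) +
        y * ((2*y*p*(x^2+y^2)^(p-1)) * (y^2)^q
          + (x^2+y^2)^p * (2*y*q*(y^2)^(q-1)))) y := by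
  have hs : x^2+y^2 ≠ 0 := by positivity
  exact (hasDerivAt_id' (x:=y)).mul ((hD_Sy x y p hs).mul (hD_U y q hy))

lemma pdyy_phi
    (hφ : ∀ x y, φ₃ x y = C₃ * ((x ^ 2 + y ^ 2) / |y| ^ (3 / 2 : ℝ)) ^ (δ : ℝ))
    (x y : ℝ) (hy : y ≠ 0) :
    pdy (fun x' y' => pdy φ₃ x' y') x y =
      C₃ * (2*δ*((x^2+y^2)^(δ-1)*(y^2)^(-(3*δ/4))
          + y*((2*y*(δ-1)*(x^2+y^2)^(δ-1-1))*(y^2)^(-(3*δ/4))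
            + (x^2+y^2)^(δ-1)*(2*y*(-(3*δ/4))*(y^2)^(-(3*δ/4)-1))))
        + 2*(-(3*δ/4))*((x^2+y^2)^δ*(y^2)^(-(3*δ/4)-1)
          + y*((2*y*δ*(x^2+y^2)^(δ-1))*(y^2)^(-(3*δ/4)-1)
            + (x^2+y^2)^δ*(2*y*(-(3*δ/4)-1)*(y^2)^(-(3*δ/4)-1-1))))) := by
  have hev : (fun y' => pdy φ₃ x y') =ᶠ[nhds y]
      fun y' => C₃ * (2*δ*(y'*((x^2+y'^2)^(δ-1) * (y'^2)^(-(3*δ/4))))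
        + 2*(-(3*δ/4))*(y'*((x^2+y'^2)^δ * (y'^2)^(-(3*δ/4)-1)))) := by
    filter_upwards [eventually_ne_nhds hy] with y' hy'
    exact pdy_phi δ C₃ φ₃ hφ x y' hy'
  have hd := ((((hD_mix x y (δ-1) (-(3*δ/4)) hy).const_mul (2*δ)).add
    ((hD_mix x y δ (-(3*δ/4)-1) hy).const_mul (2*(-(3*δ/4))))).const_mul C₃)
  rw [pdy, hev.deriv_eq]
  refine hd.deriv.trans ?_
  ring

lemma master (τ a₁ a₂ κ₁ κ₂ : ℝ) (hτ : τ ≠ 0)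
    (hφ : ∀ x y, φ₃ x y = C₃ * ((x ^ 2 + y ^ 2) / |y| ^ (3 / 2 : ℝ)) ^ (δ : ℝ))
    (x y : ℝ) (hy : y ≠ 0) :
    τ * Mop τ a₁ a₂ κ₁ κ₂ φ₃ x y =
      δ * (C₃ * ((x^2+y^2)^δ * (y^2)^(-(3*δ/4)))) *
        (x + 2*a₁*x/(x^2+y^2) + 2*a₂*y/(x^2+y^2) - 3*a₂/(2*y)
          + κ₁*((4*δ-4)*x^2/(x^2+y^2)^2 + 2/(x^2+y^2))
          + κ₂*((4*δ-4)*y^2/(x^2+y^2)^2 + (2-6*δ)/(x^2+y^2)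
              + (9*δ/4+3/2)/y^2)) := by
  have hs : (0:ℝ) < x^2+y^2 := by positivity
  have hy2 : (0:ℝ) < y^2 := by positivity
  have e1 : (x^2+y^2)^(δ-1) = (x^2+y^2)^δ / (x^2+y^2) := by
    rw [Real.rpow_sub hs, Real.rpow_one]
  have e2 : (x^2+y^2)^(δ-1-1) = (x^2+y^2)^δ / (x^2+y^2)^2 := by
    rw [show δ-1-1 = δ-2 by ring, Real.rpow_sub hs,
      show (2:ℝ) = ((2:ℕ):ℝ) by norm_num, Real.rpow_natCast]
  have u1 : (y^2)^(-(3*δ/4)-1) = (y^2)^(-(3*δ/4)) / (y^2) := by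
    rw [Real.rpow_sub hy2, Real.rpow_one]
  have u2 : (y^2)^(-(3*δ/4)-1-1) = (y^2)^(-(3*δ/4)) / (y^2)^2 := by
    rw [show -(3*δ/4)-1-1 = -(3*δ/4)-2 by ring, Real.rpow_sub hy2,
      show (2:ℝ) = ((2:ℕ):ℝ) by norm_num, Real.rpow_natCast]
  rw [Mop, pdx_phi δ C₃ φ₃ hφ x y hy, pdy_phi δ C₃ φ₃ hφ x y hy,
    pdxx_phi δ C₃ φ₃ hφ x y hy, pdyy_phi δ C₃ φ₃ hφ x y hy, e1, e2, u1, u2]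
  field_simp
  ring

lemma base_lower (x y : ℝ) (hy : y ≠ 0) :
    (x^2+y^2)^((1:ℝ)/4) ≤ (x^2+y^2)/|y|^(3/2:ℝ) := by
  have hs : (0:ℝ) < x^2+y^2 := by positivity
  have h0 : (0:ℝ) < |y|^(3/2:ℝ) := Real.rpow_pos_of_pos (abs_pos.mpr hy) _
  have hu : |y|^(3/2:ℝ) ≤ (x^2+y^2)^(3/4:ℝ) := by
    rw [abs_pow32]
    exact Real.rpow_le_rpow (sq_nonneg y) (by nlinarith [sq_nonneg x]) (by norm_num)
  have he : (x^2+y^2)^((1:ℝ)/4) = (x^2+y^2)/(x^2+y^2)^(3/4:ℝ) := by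
    rw [eq_div_iff (ne_of_gt (Real.rpow_pos_of_pos hs _)), ← Real.rpow_add hs]
    norm_num
  rw [he]
  gcongr

lemma grow (δ A x y : ℝ) (hδ0 : 0 < δ) (hy : 1 ≤ |y|)
    (hs : (max A 1)^((4:ℝ)/δ) ≤ x^2+y^2) :
    A ≤ ((x^2+y^2)/|y|^(3/2:ℝ))^(δ:ℝ) := by
  have hy0 : y ≠ 0 := by intro h; rw [h] at hy; simp at hy; linarith
  have hm1 : (1:ℝ) ≤ max A 1 := le_max_right _ _
  have hm0 : (0:ℝ) ≤ max A 1 := by linarith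
  have h1 : ((max A 1)^((4:ℝ)/δ))^((1:ℝ)/4) ≤ (x^2+y^2)^((1:ℝ)/4) :=
    Real.rpow_le_rpow (Real.rpow_nonneg hm0 _) hs (by norm_num)
  have h2 : (x^2+y^2)^((1:ℝ)/4) ≤ (x^2+y^2)/|y|^(3/2:ℝ) := base_lower x y hy0
  have h3 : (((max A 1)^((4:ℝ)/δ))^((1:ℝ)/4))^δ ≤ ((x^2+y^2)/|y|^(3/2:ℝ))^δ :=
    Real.rpow_le_rpow (Real.rpow_nonneg (Real.rpow_nonneg hm0 _) _)
      (h1.trans h2) hδ0.le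
  have h4 : (((max A 1)^((4:ℝ)/δ))^((1:ℝ)/4))^δ = max A 1 := by
    rw [← Real.rpow_mul hm0, ← Real.rpow_mul hm0,
      show (4:ℝ)/δ * (1/4) * δ = 1 by field_simp, Real.rpow_one]
  calc A ≤ max A 1 := le_max_left _ _
    _ = _ := h4.symm
    _ ≤ _ := h3

lemma sq_le_aux {c w : ℝ} (hc : 0 ≤ c) (hw : 0 ≤ w) (h : c^2 ≤ w^2) : c ≤ w := by
  nlinarith

lemma bound1 (a₁ x s : ℝ) (hs : 0 < s) (hx1 : 1 ≤ -x) (h16 : 16 * |a₁| ≤ s) :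
    2*a₁*x/s ≤ -x/8 := by
  rw [div_le_iff₀ hs]
  nlinarith [mul_nonneg (by linarith : (0:ℝ) ≤ -x)
    (by nlinarith [neg_abs_le a₁] : (0:ℝ) ≤ s/8 + 2*a₁)]

lemma bound2 (a₂ x y s : ℝ) (hs : 0 < s) (hx1 : 1 ≤ -x) (hy1 : 1 ≤ |y|)
    (hys : y^2 ≤ s) (hv : 28 * |a₂| ≤ (-x) * |y|) :
    2*a₂*y/s - 3*a₂/(2*y) ≤ -x/8 := by
  have hyap : (0:ℝ) < |y| := by linarith
  have e1 : 2*a₂*y/s ≤ 2 * |a₂| * |y| / s := by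
    apply div_le_div_of_nonneg_right ?_ hs.le
    nlinarith [le_abs_self (a₂*y), abs_mul a₂ y]
  have e1' : 2 * |a₂| * |y| / s ≤ 2 * |a₂| / |y| := by
    rw [div_le_div_iff₀ hs hyap]
    nlinarith [abs_mul_abs_self y, abs_nonneg a₂,
      mul_le_mul_of_nonneg_left hys (abs_nonneg a₂)]
  have e2 : -(3*a₂/(2*y)) ≤ 3 * |a₂| / (2 * |y|) := by
    have h := neg_le_abs (3*a₂/(2*y))
    have heq : |3*a₂/(2*y)| = 3 * |a₂| / (2 * |y|) := by
      rw [abs_div, abs_mul, abs_mul]; norm_num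
    linarith
  have e3 : 2 * |a₂| / |y| + 3 * |a₂| / (2 * |y|) ≤ -x/8 := by
    have hco : 2 * |a₂| / |y| + 3 * |a₂| / (2 * |y|) = 7 * |a₂| / (2 * |y|) := by
      field_simp; ring
    rw [hco, div_le_iff₀ (by linarith : (0:ℝ) < 2 * |y|)]
    nlinarith [hv, hyap]
  linarith

lemma bound3 (κ₁ κ₂ x s : ℝ) (hs : 0 < s) (hx1 : 1 ≤ -x)
    (hkk : 16*κ₁ + 16*κ₂ ≤ s) :
    2*κ₁/s + 2*κ₂/s ≤ -x/8 := by
  have h1 : (2*κ₁+2*κ₂)/s ≤ -x/8 := by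
    rw [div_le_iff₀ hs]
    nlinarith [mul_nonneg (by linarith : (0:ℝ) ≤ -x-1) hs.le]
  have h2 : 2*κ₁/s + 2*κ₂/s = (2*κ₁+2*κ₂)/s := by ring
  linarith

lemma bound4 (κ₂ x y : ℝ) (hy2 : 1 ≤ y^2) (hw : 24*κ₂ ≤ (-x)*y^2) :
    3*κ₂/y^2 ≤ -x/8 := by
  rw [div_le_iff₀ (by linarith : (0:ℝ) < y^2)]
  nlinarith

lemma Gbound (δ a₁ a₂ κ₁ κ₂ x y R₀ : ℝ)
    (hδ0 : 0 < δ) (hδ2 : δ < 1/2) (hκ₁ : 0 ≤ κ₁) (hκ₂ : 0 < κ₂)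
    (hx : x ≤ -1) (hy1 : 1 ≤ |y|)
    (hR₀def : R₀ = 16 * |a₁| + 40 * |a₂| + 16*κ₁ + 50*κ₂ + 1)
    (hRs : R₀^2 ≤ x^2+y^2) :
    x + 2*a₁*x/(x^2+y^2) + 2*a₂*y/(x^2+y^2) - 3*a₂/(2*y)
      + κ₁*((4*δ-4)*x^2/(x^2+y^2)^2 + 2/(x^2+y^2))
      + κ₂*((4*δ-4)*y^2/(x^2+y^2)^2 + (2-6*δ)/(x^2+y^2)
          + (9*δ/4+3/2)/y^2) ≤ x/2 := by
  have ha1 := abs_nonneg a₁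
  have ha2 := abs_nonneg a₂
  have hR₀1 : 1 ≤ R₀ := by rw [hR₀def]; nlinarith
  have hy2 : 1 ≤ y^2 := by rw [← sq_abs]; nlinarith
  have hx1 : 1 ≤ -x := by linarith
  have hx2 : 1 ≤ x^2 := by nlinarith
  have hs : (0:ℝ) < x^2+y^2 := by positivity
  have hs2 : (0:ℝ) < (x^2+y^2)^2 := by positivity
  have hRR : R₀ ≤ x^2+y^2 := by nlinarith
  have h2xy : x^2+y^2 ≤ 2*(x^2*y^2) := by nlinarith
  have hxy2 : R₀^2/2 ≤ x^2*y^2 := by nlinarith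
  -- |a₂| control
  have hv : 28 * |a₂| ≤ (-x) * |y| := by
    apply sq_le_aux (by positivity) (by positivity)
    have h40 : (40 * |a₂|)^2 ≤ R₀^2 :=
      pow_le_pow_left₀ (by positivity) (by rw [hR₀def]; nlinarith) 2
    have hvsq : ((-x) * |y|)^2 = x^2*y^2 := by
      rw [mul_pow, sq_abs]; ring
    rw [hvsq]
    nlinarith [sq_abs a₂]
  -- κ₂ control
  have hw : 24*κ₂ ≤ (-x)*y^2 := by
    apply sq_le_aux (by positivity) (by nlinarith)
    have h34 : (34*κ₂)^2 ≤ R₀^2 :=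
      pow_le_pow_left₀ (by positivity) (by rw [hR₀def]; nlinarith) 2
    have hy4 : x^2*y^2 ≤ x^2*y^2*y^2 := by
      nlinarith [mul_nonneg (mul_nonneg (sq_nonneg x) (sq_nonneg y))
        (by linarith : (0:ℝ) ≤ y^2 - 1)]
    have hwsq : ((-x)*y^2)^2 = x^2*y^2*y^2 := by ring
    rw [hwsq]
    nlinarith
  have hB1 : 2*a₁*x/(x^2+y^2) ≤ -x/8 :=
    bound1 a₁ x _ hs hx1 (by rw [hR₀def] at hRR; nlinarith)
  have hB2 : 2*a₂*y/(x^2+y^2) - 3*a₂/(2*y) ≤ -x/8 :=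
    bound2 a₂ x y _ hs hx1 hy1 (by nlinarith) hv
  have hB3 : 2*κ₁/(x^2+y^2) + 2*κ₂/(x^2+y^2) ≤ -x/8 :=
    bound3 κ₁ κ₂ x _ hs hx1 (by rw [hR₀def] at hRR; nlinarith)
  have hB4 : 3*κ₂/y^2 ≤ -x/8 := bound4 κ₂ x y hy2 hw
  have hA1 : κ₁*((4*δ-4)*x^2/(x^2+y^2)^2 + 2/(x^2+y^2)) ≤ 2*κ₁/(x^2+y^2) := by
    have hneg : (4*δ-4)*x^2/(x^2+y^2)^2 ≤ 0 := by
      apply div_nonpos_of_nonpos_of_nonneg ?_ hs2.le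
      nlinarith [sq_nonneg x]
    calc κ₁*((4*δ-4)*x^2/(x^2+y^2)^2 + 2/(x^2+y^2))
        ≤ κ₁*(2/(x^2+y^2)) := by
          apply mul_le_mul_of_nonneg_left ?_ hκ₁; linarith
      _ = 2*κ₁/(x^2+y^2) := by ring
  have hA2 : κ₂*((4*δ-4)*y^2/(x^2+y^2)^2 + (2-6*δ)/(x^2+y^2) + (9*δ/4+3/2)/y^2)
      ≤ 2*κ₂/(x^2+y^2) + 3*κ₂/y^2 := by
    have hneg : (4*δ-4)*y^2/(x^2+y^2)^2 ≤ 0 := by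
      apply div_nonpos_of_nonpos_of_nonneg ?_ hs2.le
      nlinarith [sq_nonneg y]
    have hle : (2-6*δ)/(x^2+y^2) ≤ 2/(x^2+y^2) := by gcongr; linarith
    have hle2 : (9*δ/4+3/2)/y^2 ≤ 3/y^2 := by gcongr; linarith
    calc κ₂*((4*δ-4)*y^2/(x^2+y^2)^2 + (2-6*δ)/(x^2+y^2) + (9*δ/4+3/2)/y^2)
        ≤ κ₂*(2/(x^2+y^2) + 3/y^2) := by
          apply mul_le_mul_of_nonneg_left ?_ hκ₂.le; linarith
      _ = 2*κ₂/(x^2+y^2) + 3*κ₂/y^2 := by ring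
  linarith

/-- the Lyapunov function `φ₃(x,y) = C₃ ((x²+y²)/|y|^{3/2})^δ` on
`X₃ = {x ≤ −1, |y| ≥ 1}`: nonnegative, tends to `∞` as `x²+y² → ∞` in `X₃`,
and for `x²+y²` large in `X₃`, `τ Mφ₃ ≤ (δ/2) x φ₃ ≤ −c |x| ((x²+y²)/|y|^{3/2})^δ`;
in particular `Mφ₃ → −∞` as `x²+y² → ∞` in `X₃`. -/
theorem LF3 (τ δ C₃ a₁ a₂ κ₁ κ₂ : ℝ) (hτ : 0 < τ)
    (hδ : δ ∈ Set.Ioo (0 : ℝ) (1 / 2)) (hC : 0 < C₃)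
    (hκ₁ : 0 ≤ κ₁) (hκ₂ : 0 < κ₂)
    (φ₃ : ℝ → ℝ → ℝ)
    (hφ : ∀ x y, φ₃ x y = C₃ * ((x ^ 2 + y ^ 2) / |y| ^ (3 / 2 : ℝ)) ^ (δ : ℝ)) :
    (∀ x y : ℝ, x ≤ -1 → 1 ≤ |y| → 0 ≤ φ₃ x y) ∧
    (∀ K : ℝ, ∃ R : ℝ, ∀ x y : ℝ, x ≤ -1 → 1 ≤ |y| → R ≤ x ^ 2 + y ^ 2 →
      K ≤ φ₃ x y) ∧
    (∃ R : ℝ, 0 < R ∧ ∃ c : ℝ, 0 < c ∧ ∀ x y : ℝ, x ≤ -1 → 1 ≤ |y| →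
      R ^ 2 ≤ x ^ 2 + y ^ 2 →
        τ * Mop τ a₁ a₂ κ₁ κ₂ φ₃ x y ≤ δ / 2 * x * φ₃ x y ∧
        δ / 2 * x * φ₃ x y ≤
          -c * |x| * ((x ^ 2 + y ^ 2) / |y| ^ (3 / 2 : ℝ)) ^ (δ : ℝ)) ∧
    (∀ K : ℝ, ∃ R : ℝ, ∀ x y : ℝ, x ≤ -1 → 1 ≤ |y| → R ≤ x ^ 2 + y ^ 2 →
      Mop τ a₁ a₂ κ₁ κ₂ φ₃ x y ≤ K) := by
  obtain ⟨hδ0, hδ2⟩ := hδ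
  obtain ⟨R₀, hR₀def⟩ : ∃ r : ℝ,
      r = 16 * |a₁| + 40 * |a₂| + 16*κ₁ + 50*κ₂ + 1 := ⟨_, rfl⟩
  have hR₀1 : 1 ≤ R₀ := by
    have := abs_nonneg a₁; have := abs_nonneg a₂
    rw [hR₀def]; nlinarith
  obtain ⟨c, hcdef⟩ : ∃ r : ℝ, r = δ*C₃/2 := ⟨_, rfl⟩
  have hc : 0 < c := by rw [hcdef]; positivity
  have main : ∀ x y : ℝ, x ≤ -1 → 1 ≤ |y| → R₀ ^ 2 ≤ x ^ 2 + y ^ 2 →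
      τ * Mop τ a₁ a₂ κ₁ κ₂ φ₃ x y ≤ δ / 2 * x * φ₃ x y ∧
      δ / 2 * x * φ₃ x y ≤
        -c * |x| * ((x ^ 2 + y ^ 2) / |y| ^ (3 / 2 : ℝ)) ^ (δ : ℝ) := by
    intro x y hx hy1 hRs
    have hy0 : y ≠ 0 := by
      intro h; rw [h] at hy1; simp at hy1; linarith
    have hs : (0:ℝ) < x^2+y^2 := by positivity
    have hG := Gbound δ a₁ a₂ κ₁ κ₂ x y R₀ hδ0 hδ2 hκ₁ hκ₂ hx hy1 hR₀def hRs
    constructor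
    · rw [master δ C₃ φ₃ τ a₁ a₂ κ₁ κ₂ hτ.ne' hφ x y hy0]
      have hrhs : δ/2*x*φ₃ x y
          = δ * (C₃ * ((x^2+y^2)^δ * (y^2)^(-(3*δ/4)))) * (x/2) := by
        rw [hφ, phi_rw δ x y hy0]; ring
      rw [hrhs]
      exact mul_le_mul_of_nonneg_left hG
        (mul_nonneg hδ0.le (mul_nonneg hC.le
          (mul_nonneg (Real.rpow_nonneg hs.le δ)
            (Real.rpow_nonneg (sq_nonneg y) _))))
    · apply le_of_eq
      rw [hφ, abs_of_nonpos (by linarith : x ≤ 0), hcdef]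
      ring
  refine ⟨?_, ?_, ⟨R₀, by linarith, c, hc, main⟩, ?_⟩
  · intro x y _ _
    rw [hφ]
    positivity
  · intro K
    refine ⟨(max (K/C₃) 1)^((4:ℝ)/δ), fun x y hx hy hR => ?_⟩
    rw [hφ]
    have h := grow δ (K/C₃) x y hδ0 hy hR
    calc K = C₃*(K/C₃) := by field_simp
      _ ≤ C₃ * ((x^2+y^2)/|y|^(3/2:ℝ))^(δ:ℝ) := mul_le_mul_of_nonneg_left h hC.le
  · intro K
    refine ⟨max (R₀^2) ((max ((-K)*τ/c) 1)^((4:ℝ)/δ)), fun x y hx hy hR => ?_⟩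
    have h1 := (main x y hx hy (le_trans (le_max_left _ _) hR)).1
    have h2 := (main x y hx hy (le_trans (le_max_left _ _) hR)).2
    have hb := grow δ ((-K)*τ/c) x y hδ0 hy (le_trans (le_max_right _ _) hR)
    obtain ⟨B, hBdef⟩ : ∃ r : ℝ, r = ((x^2+y^2)/|y|^(3/2:ℝ))^(δ:ℝ) := ⟨_, rfl⟩
    rw [← hBdef] at h2 hb
    have hB0 : 0 ≤ B := by
      rw [hBdef]
      exact Real.rpow_nonneg
        (div_nonneg (by positivity) (Real.rpow_nonneg (abs_nonneg y) _)) _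
    have hxabs : 1 ≤ |x| := by
      rw [abs_of_nonpos (by linarith : x ≤ 0)]; linarith
    have h4 : -c * |x| * B ≤ -c*B := by
      have := le_mul_of_one_le_right (mul_nonneg hc.le hB0) hxabs
      nlinarith
    have h5 : -c*B ≤ K*τ := by
      have h6 := mul_le_mul_of_nonneg_left hb hc.le
      have h7 : c*((-K)*τ/c) = -(K*τ) := by field_simp
      nlinarith
    have h8 : τ * Mop τ a₁ a₂ κ₁ κ₂ φ₃ x y ≤ τ * K := by nlinarith
    exact (mul_le_mul_iff_right₀ hτ).1 h8
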